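/- For the trivial synchronization algebra ⊥ (where no two labelled actions synchronize and every action may run asynchronously), there is an isomorphism of 1-dimensional labelled precubical sets □[p]_{≤1} ×_⊥ □[q]_{≤1} ≅ □[p+q]_{≤1}. -/

import Mathlib

inductive SyncElt (Lbl : Type*) where
  | bot : SyncElt Lbl
  | zero : SyncElt Lbl
  | act : Lbl → SyncElt Lbl

structure SyncAlgebra (Lbl : Type*) where
  op : SyncElt Lbl → SyncElt Lbl → SyncElt Lbl
  comm : ∀ x y, op x y = op y x
  assoc : ∀ x y z, op (op x y) z = op x (op y z)
  op_bot : ∀ x, x ≠ SyncElt.zero → op x SyncElt.bot = SyncElt.bot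
  op_eq_zero_iff : ∀ x y, op x y = SyncElt.zero ↔ x = SyncElt.zero ∧ y = SyncElt.zero
  act_zero : ∀ a : Lbl, op (SyncElt.act a) SyncElt.zero = SyncElt.act a ∨
    op (SyncElt.act a) SyncElt.zero = SyncElt.bot

/-- A 1-dimensional `σ`-labelled precubical set: a set `V` of `0`-cubes (states),
a set `E` of `1`-cubes with source `s`, target `t`, and a labelling map to
`!^σΣ` in dimension `1`, i.e. every `1`-cube is labelled by an action `a ∈ Σ`
(`lab_act`) which may run asynchronously (`lab_ok`: `σ(a,0) = a`). -/
structure LPC1 (Lbl : Type*) (S : SyncAlgebra Lbl) where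
  V : Type*
  E : Type*
  s : E → V
  t : E → V
  lab : E → SyncElt Lbl
  lab_act : ∀ e, ∃ a : Lbl, lab e = SyncElt.act a
  lab_ok : ∀ e, S.op (lab e) SyncElt.zero = lab e

/-- The synchronized product `K ×_σ L` of two 1-dimensional `σ`-labelled
precubical sets: `(K ×_σ L)₀ = K₀ × L₀` and
`(K ×_σ L)₁ = (K₁ × L₀) ⊔ (K₀ × L₁) ⊔ {(x,y) ∈ K₁ × L₁ | σ(ℓx, ℓy) ≠ ⊥}`,
with face maps applied componentwise (diagonally for synchronized pairs) and
labels `ℓ(x,y) = ℓ(x)`, `ℓ(y)`, or `σ(ℓx, ℓy)` respectively. -/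
def prodSync {Lbl : Type*} (S : SyncAlgebra Lbl) (K L : LPC1 Lbl S) : LPC1 Lbl S where
  V := K.V × L.V
  E := (K.E × L.V) ⊕ (K.V × L.E) ⊕
    {p : K.E × L.E // S.op (K.lab p.1) (L.lab p.2) ≠ SyncElt.bot}
  s := fun e => match e with
    | Sum.inl (x, v) => (K.s x, v)
    | Sum.inr (Sum.inl (v, y)) => (v, L.s y)
    | Sum.inr (Sum.inr ⟨(x, y), _⟩) => (K.s x, L.s y)
  t := fun e => match e with
    | Sum.inl (x, v) => (K.t x, v)
    | Sum.inr (Sum.inl (v, y)) => (v, L.t y)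
    | Sum.inr (Sum.inr ⟨(x, y), _⟩) => (K.t x, L.t y)
  lab := fun e => match e with
    | Sum.inl (x, _) => K.lab x
    | Sum.inr (Sum.inl (_, y)) => L.lab y
    | Sum.inr (Sum.inr ⟨(x, y), _⟩) => S.op (K.lab x) (L.lab y)
  lab_act := by
    rintro (⟨x, v⟩ | ⟨v, y⟩ | ⟨⟨x, y⟩, h⟩)
    · exact K.lab_act x
    · exact L.lab_act y
    · dsimp only
      rcases hxy : S.op (K.lab x) (L.lab y) with _ | _ | a
      · exact absurd hxy h
      · obtain ⟨a, ha⟩ := K.lab_act x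
        have := ((S.op_eq_zero_iff _ _).mp hxy).1
        rw [ha] at this
        exact absurd this (by simp)
      · exact ⟨a, rfl⟩
  lab_ok := by
    rintro (⟨x, v⟩ | ⟨v, y⟩ | ⟨⟨x, y⟩, h⟩)
    · exact K.lab_ok x
    · exact L.lab_ok y
    · dsimp only
      rw [S.assoc, L.lab_ok]

/-- An isomorphism of 1-dimensional `σ`-labelled precubical sets. -/
structure LPC1Iso {Lbl : Type*} {S : SyncAlgebra Lbl} (K L : LPC1 Lbl S) where
  vEquiv : K.V ≃ L.V
  eEquiv : K.E ≃ L.E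
  s_comm : ∀ e, L.s (eEquiv e) = vEquiv (K.s e)
  t_comm : ∀ e, L.t (eEquiv e) = vEquiv (K.t e)
  lab_comm : ∀ e, L.lab (eEquiv e) = K.lab e

/-- The trivial synchronization algebra `⊥`: `σ(a,b) = ⊥` for all labels
`a, b ∈ Σ` (no two actions synchronize) and `σ(a,0) = a` (every action may
run asynchronously). -/
def trivialSync (Lbl : Type*) : SyncAlgebra Lbl where
  op := fun x y => match x, y with
    | SyncElt.zero, SyncElt.zero => SyncElt.zero
    | SyncElt.zero, SyncElt.act a => SyncElt.act a
    | SyncElt.act a, SyncElt.zero => SyncElt.act a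
    | _, _ => SyncElt.bot
  comm := by intro x y; cases x <;> cases y <;> rfl
  assoc := by intro x y z; cases x <;> cases y <;> cases z <;> rfl
  op_bot := by intro x hx; cases x <;> rfl
  op_eq_zero_iff := by intro x y; cases x <;> cases y <;> simp
  act_zero := fun a => Or.inl rfl

/-- The 1-truncation `□[p]_{≤1}` of the standard labelled `p`-cube with labels
`a : Fin p → Σ`: vertices are `{0,1}ᵖ`, and a `1`-cube is a pair `(i, v)`
where `i` is the coordinate being executed (labelled `a i`) and `v` is the
vertex where it starts (so `v i = false`). -/
def cube1 {Lbl : Type*} (S : SyncAlgebra Lbl) (p : ℕ) (a : Fin p → Lbl)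
    (ha : ∀ i, S.op (SyncElt.act (a i)) SyncElt.zero = SyncElt.act (a i)) : LPC1 Lbl S where
  V := Fin p → Bool
  E := {iv : Fin p × (Fin p → Bool) // iv.2 iv.1 = false}
  s := fun e => e.1.2
  t := fun e => Function.update e.1.2 e.1.1 true
  lab := fun e => SyncElt.act (a e.1.1)
  lab_act := fun e => ⟨a e.1.1, rfl⟩
  lab_ok := fun e => ha e.1.1


section Aux
variable {p q : ℕ}

lemma aux_update_append_left (v : Fin p → Bool) (w : Fin q → Bool) (i : Fin p) (x : Bool) :
    Function.update (Fin.append v w) (Fin.castAdd q i) x = Fin.append (Function.update v i x) w := by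
  funext k
  refine Fin.addCases (fun j => ?_) (fun j => ?_) k
  · by_cases h : j = i
    · subst h; simp
    · rw [Function.update_of_ne (by simpa using h), Fin.append_left, Fin.append_left,
        Function.update_of_ne h]
  · rw [Function.update_of_ne (by
      intro hc
      have := congrArg Fin.val hc
      simp at this; omega), Fin.append_right, Fin.append_right]

lemma aux_update_append_right (v : Fin p → Bool) (w : Fin q → Bool) (j : Fin q) (x : Bool) :
    Function.update (Fin.append v w) (Fin.natAdd p j) x = Fin.append v (Function.update w j x) := by
  funext k
  refine Fin.addCases (fun i => ?_) (fun i => ?_) k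
  · rw [Function.update_of_ne (by
      intro hc
      have := congrArg Fin.val hc
      simp at this; omega), Fin.append_left, Fin.append_left]
  · by_cases h : i = j
    · subst h; simp
    · rw [Function.update_of_ne (by
        intro hc
        have := congrArg Fin.val hc
        simp at this
        exact h (Fin.ext this)), Fin.append_right, Fin.append_right,
        Function.update_of_ne h]

lemma aux_append_ext (u : Fin (p + q) → Bool) :
    Fin.append (fun i => u (Fin.castAdd q i)) (fun j => u (Fin.natAdd p j)) = u := by
  funext k
  refine Fin.addCases (fun i => ?_) (fun j => ?_) k
  · rw [Fin.append_left]
  · rw [Fin.append_right]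

end Aux

def PE (Lbl : Type*) (p q : ℕ) (a : Fin p → Lbl) (b : Fin q → Lbl) :=
  ((cube1 (trivialSync Lbl) p a (fun _ => rfl)).E ×
              (cube1 (trivialSync Lbl) q b (fun _ => rfl)).V) ⊕
            (((cube1 (trivialSync Lbl) p a (fun _ => rfl)).V ×
              (cube1 (trivialSync Lbl) q b (fun _ => rfl)).E) ⊕
            {pr : (cube1 (trivialSync Lbl) p a (fun _ => rfl)).E ×
              (cube1 (trivialSync Lbl) q b (fun _ => rfl)).E //
              (trivialSync Lbl).op ((cube1 (trivialSync Lbl) p a (fun _ => rfl)).lab pr.1)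
                ((cube1 (trivialSync Lbl) q b (fun _ => rfl)).lab pr.2) ≠ SyncElt.bot})

def myInv (Lbl : Type*) (p q : ℕ) (a : Fin p → Lbl) (b : Fin q → Lbl)
    (e : (cube1 (trivialSync Lbl) (p+q) (Fin.append a b) (fun _ => rfl)).E) :
    PE Lbl p q a b :=
  Fin.addCases (motive := fun k => e.1.2 k = false → PE Lbl p q a b)
      (fun i h => Sum.inl (⟨(i, fun i' => e.1.2 (Fin.castAdd q i')), h⟩,
        fun j' => e.1.2 (Fin.natAdd p j')))
      (fun j h => Sum.inr (Sum.inl ((fun i' => e.1.2 (Fin.castAdd q i')),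
        ⟨(j, fun j' => e.1.2 (Fin.natAdd p j')), h⟩)))
      e.1.1 e.2

def myFun (Lbl : Type*) (p q : ℕ) (a : Fin p → Lbl) (b : Fin q → Lbl) (e : PE Lbl p q a b) :
    (cube1 (trivialSync Lbl) (p+q) (Fin.append a b) (fun _ => rfl)).E :=
  match e with
  | Sum.inl (⟨(i, v), hv⟩, w) =>
      ⟨(Fin.castAdd q i, Fin.append v w), by exact (Fin.append_left v w i).trans hv⟩
  | Sum.inr (Sum.inl (v, ⟨(j, w), hw⟩)) =>
      ⟨(Fin.natAdd p j, Fin.append v w), by exact (Fin.append_right v w j).trans hw⟩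
  | Sum.inr (Sum.inr ⟨(x, y), h⟩) => absurd rfl h

lemma my_left (Lbl : Type*) (p q : ℕ) (a : Fin p → Lbl) (b : Fin q → Lbl) :
    ∀ e : PE Lbl p q a b, myInv Lbl p q a b (myFun Lbl p q a b e) = e := by
  rintro (⟨⟨⟨i, v⟩, hv⟩, w⟩ | ⟨v, ⟨⟨j, w⟩, hw⟩⟩ | ⟨⟨x, y⟩, h⟩)
  · unfold myInv myFun
    simp only [Fin.addCases_left]
    erw [Fin.addCases_left]
    exact congrArg Sum.inl (congrArg₂ Prod.mk
      (Subtype.ext (congrArg₂ Prod.mk rfl (funext fun i' => Fin.append_left v w i')))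
      (funext fun j' => Fin.append_right v w j'))
  · unfold myInv myFun
    simp only [Fin.addCases_right]
    erw [Fin.addCases_right]
    exact congrArg Sum.inr (congrArg Sum.inl (congrArg₂ Prod.mk
      (funext fun i' => Fin.append_left v w i')
      (Subtype.ext (congrArg₂ Prod.mk rfl (funext fun j' => Fin.append_right v w j')))))
  · exact absurd rfl h

lemma my_right (Lbl : Type*) (p q : ℕ) (a : Fin p → Lbl) (b : Fin q → Lbl) :
    ∀ e, myFun Lbl p q a b (myInv Lbl p q a b e) = e := by
  rintro ⟨⟨k, u⟩, hk⟩
  revert hk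
  refine Fin.addCases (fun i => ?_) (fun j => ?_) k <;> intro hk
  · unfold myInv
    simp only [Fin.addCases_left]
    erw [Fin.addCases_left]
    unfold myFun
    exact Subtype.ext (congrArg₂ Prod.mk rfl (aux_append_ext u))
  · unfold myInv
    simp only [Fin.addCases_right]
    erw [Fin.addCases_right]
    unfold myFun
    exact Subtype.ext (congrArg₂ Prod.mk rfl (aux_append_ext u))

/-- For the trivial synchronization algebra `⊥`, the synchronized product of the
1-truncations of two labelled cubes is the 1-truncation of the labelled
`(p+q)`-cube: `□[p]_{≤1} ×_⊥ □[q]_{≤1} ≅ □[p+q]_{≤1}`. -/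
theorem prodSync_trivial_cube {Lbl : Type*} [Nonempty Lbl] (p q : ℕ)
    (a : Fin p → Lbl) (b : Fin q → Lbl) :
    Nonempty (LPC1Iso
      (prodSync (trivialSync Lbl) (cube1 (trivialSync Lbl) p a (fun _ => rfl))
        (cube1 (trivialSync Lbl) q b (fun _ => rfl)))
      (cube1 (trivialSync Lbl) (p + q) (Fin.append a b) (fun _ => rfl))) := by
  refine ⟨⟨?vE, ?eE, ?s, ?t, ?l⟩⟩
  case vE =>
    exact {
      toFun := fun vw => Fin.append vw.1 vw.2
      invFun := fun u => (fun i => u (Fin.castAdd q i), fun j => u (Fin.natAdd p j))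
      left_inv := by
        rintro ⟨v, w⟩
        exact Prod.ext (funext fun i => Fin.append_left v w i) (funext fun j => Fin.append_right v w j)
      right_inv := fun u => aux_append_ext u }
  case eE =>
    exact {
      toFun := myFun Lbl p q a b
      invFun := myInv Lbl p q a b
      left_inv := my_left Lbl p q a b
      right_inv := my_right Lbl p q a b }
  case s =>
    rintro (⟨⟨⟨i, v⟩, hv⟩, w⟩ | ⟨v, ⟨⟨j, w⟩, hw⟩⟩ | ⟨⟨x, y⟩, h⟩)
    · rfl
    · rfl
    · exact absurd rfl h
  case t =>
    rintro (⟨⟨⟨i, v⟩, hv⟩, w⟩ | ⟨v, ⟨⟨j, w⟩, hw⟩⟩ | ⟨⟨x, y⟩, h⟩)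
    · exact aux_update_append_left v w i true
    · exact aux_update_append_right v w j true
    · exact absurd rfl h
  case l =>
    rintro (⟨⟨⟨i, v⟩, hv⟩, w⟩ | ⟨v, ⟨⟨j, w⟩, hw⟩⟩ | ⟨⟨x, y⟩, h⟩)
    · exact congrArg SyncElt.act (Fin.append_left a b i)
    · exact congrArg SyncElt.act (Fin.append_right a b j)
    · exact absurd rfl h
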